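/- For the penalized objective h(Σ) = (c/2)(log det Σ + tr(Σ⁻¹ S)) + (η/2)(tr(Σ⁻¹ T) − log det(Σ⁻¹ T) − m) with c > 0, η > 0, S symmetric positive semidefinite, T symmetric positive definite, the unique minimizer over SPD matrices Σ is Σ* = (cS + ηT)/(c + η). -/

import Mathlib

open Matrix Real Finset

section Aux
variable {m : ℕ}

lemma myPosDef_smul {M : Matrix (Fin m) (Fin m) ℝ} (hM : M.PosDef) {a : ℝ} (ha : 0 < a) :
    (a • M).PosDef := by
  refine ⟨?_, fun x hx => ?_⟩
  · unfold Matrix.IsHermitian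
    rw [conjTranspose_smul, hM.1.eq]
    simp
  · exact (hM.smul ha).2 hx

lemma myPosDef_conj {A B : Matrix (Fin m) (Fin m) ℝ} (hA : A.PosDef) (hB : IsUnit B.det) :
    (Bᴴ * A * B).PosDef := by
  refine ⟨Matrix.isHermitian_conjTranspose_mul_mul B hA.1, fun x hx => ?_⟩
  exact (hA.conjTranspose_mul_mul_same
    (Matrix.mulVec_injective_iff_isUnit.2 ((Matrix.isUnit_iff_isUnit_det B).2 hB))).2 hx

lemma trace_sub_log_det {M : Matrix (Fin m) (Fin m) ℝ} (hM : M.PosDef) :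
    0 ≤ M.trace - Real.log M.det - m ∧
      (M.trace - Real.log M.det - (m : ℝ) = 0 ↔ M = 1) := by
  have hH := hM.1
  have hpos : ∀ i, 0 < hH.eigenvalues i := fun i => hM.eigenvalues_pos i
  have hU : (star (hH.eigenvectorUnitary : Matrix (Fin m) (Fin m) ℝ)) *
      (hH.eigenvectorUnitary : Matrix (Fin m) (Fin m) ℝ) = 1 :=
    Matrix.mem_unitaryGroup_iff'.mp (hH.eigenvectorUnitary).2
  have hU' : (hH.eigenvectorUnitary : Matrix (Fin m) (Fin m) ℝ) *
      (star (hH.eigenvectorUnitary : Matrix (Fin m) (Fin m) ℝ)) = 1 :=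
    Matrix.mem_unitaryGroup_iff.mp (hH.eigenvectorUnitary).2
  have htr : M.trace = ∑ i, hH.eigenvalues i := by
    conv_lhs => rw [hH.spectral_theorem]
    rw [Unitary.conjStarAlgAut_apply, Matrix.trace_mul_cycle, hU, Matrix.one_mul, Matrix.trace_diagonal]
    simp [RCLike.ofReal]
  have hdet : M.det = ∏ i, hH.eigenvalues i := by
    simpa [RCLike.ofReal] using hH.det_eq_prod_eigenvalues
  have hlog : Real.log M.det = ∑ i, Real.log (hH.eigenvalues i) := by
    rw [hdet, Real.log_prod]
    exact fun i _ => (hpos i).ne'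
  have hsum : M.trace - Real.log M.det - (m : ℝ) =
      ∑ i, (hH.eigenvalues i - Real.log (hH.eigenvalues i) - 1) := by
    rw [htr, hlog, Finset.sum_sub_distrib, Finset.sum_sub_distrib]
    simp
  have hterm : ∀ i : Fin m, i ∈ Finset.univ →
      0 ≤ hH.eigenvalues i - Real.log (hH.eigenvalues i) - 1 := by
    intro i _
    have := Real.log_le_sub_one_of_pos (hpos i)
    linarith
  refine ⟨by rw [hsum]; exact Finset.sum_nonneg hterm, ?_, ?_⟩
  · intro h0
    rw [hsum] at h0
    have hall := (Finset.sum_eq_zero_iff_of_nonneg hterm).mp h0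
    have heig : ∀ i, hH.eigenvalues i = 1 := by
      intro i
      by_contra hne
      have h1 := Real.log_lt_sub_one_of_pos (hpos i) hne
      have h2 := hall i (Finset.mem_univ i)
      linarith
    have hdiag : Matrix.diagonal (RCLike.ofReal ∘ hH.eigenvalues) =
        (1 : Matrix (Fin m) (Fin m) ℝ) := by
      have hfun : (RCLike.ofReal ∘ hH.eigenvalues : Fin m → ℝ) = fun _ => 1 := by
        funext i; simp [RCLike.ofReal, heig i]
      rw [hfun]
      exact Matrix.diagonal_one
    conv_lhs => rw [hH.spectral_theorem]
    rw [Unitary.conjStarAlgAut_apply, hdiag, Matrix.mul_one, hU']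
  · rintro rfl
    simp [Matrix.trace_one]

open scoped MatrixOrder in
lemma inv_mul_key {Sig A : Matrix (Fin m) (Fin m) ℝ} (hSig : Sig.PosDef) (hA : A.PosDef) :
    0 ≤ (Sig⁻¹ * A).trace - Real.log (Sig⁻¹ * A).det - m ∧
      ((Sig⁻¹ * A).trace - Real.log (Sig⁻¹ * A).det - (m : ℝ) = 0 ↔ Sig = A) := by
  set B := CFC.sqrt Sig with hBdef
  have hBherm : B.IsHermitian := by simpa using (CFC.sqrt_nonneg Sig).1
  have hBB : B * B = Sig := CFC.sqrt_mul_sqrt_self Sig hSig.posSemidef.nonneg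
  have hdetB : IsUnit B.det := by
    have hd : B.det * B.det = Sig.det := by rw [← Matrix.det_mul, hBB]
    have hSd := hSig.det_pos
    refine isUnit_iff_ne_zero.2 fun h => ?_
    rw [h, mul_zero] at hd
    linarith
  have hBinv_herm : (B⁻¹).IsHermitian := hBherm.inv
  set M := B⁻¹ * A * B⁻¹ with hMdef
  have hMpd : M.PosDef := by
    have := myPosDef_conj hA (B.isUnit_nonsing_inv_det hdetB)
    rwa [hBinv_herm.eq] at this
  have hSinv : Sig⁻¹ = B⁻¹ * B⁻¹ := by rw [← hBB, Matrix.mul_inv_rev]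
  have htr : (Sig⁻¹ * A).trace = M.trace := by
    rw [hSinv, hMdef, Matrix.trace_mul_cycle (B⁻¹) A (B⁻¹)]
  have hdet : (Sig⁻¹ * A).det = M.det := by
    rw [hSinv, hMdef]
    simp only [Matrix.det_mul]
    ring
  have hkey := trace_sub_log_det hMpd
  rw [htr, hdet]
  refine ⟨hkey.1, hkey.2.trans ?_⟩
  constructor
  · intro hM1
    have hBiB : B⁻¹ * B = 1 := B.nonsing_inv_mul hdetB
    have hBBi : B * B⁻¹ = 1 := B.mul_nonsing_inv hdetB
    have : B * M * B = A := by
      rw [hMdef]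
      calc B * (B⁻¹ * A * B⁻¹) * B
          = (B * B⁻¹) * A * (B⁻¹ * B) := by
            simp only [Matrix.mul_assoc]
        _ = A := by rw [hBiB, hBBi, Matrix.one_mul, Matrix.mul_one]
    rw [hM1, Matrix.mul_one, hBB] at this
    exact this
  · rintro rfl
    rw [hMdef, hSinv] at *
    have hBiB : B⁻¹ * B = 1 := B.nonsing_inv_mul hdetB
    calc B⁻¹ * Sig * B⁻¹ = B⁻¹ * (B * B) * B⁻¹ := by rw [hBB]
      _ = (B⁻¹ * B) * (B * B⁻¹) := by simp only [Matrix.mul_assoc]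
      _ = 1 := by rw [hBiB, B.mul_nonsing_inv hdetB, Matrix.one_mul]

end Aux

/-- The penalized objective h(Σ) = (c/2)(log det Σ + tr(Σ⁻¹S)) +
(η/2)(tr(Σ⁻¹T) − log det(Σ⁻¹T) − m) with c, η > 0, S PSD, T SPD, is uniquely
minimized over SPD matrices at Σ* = (cS + ηT)/(c + η). -/
theorem penalized_objective_unique_minimizer
    (m : ℕ) (hm : 1 ≤ m) (c η : ℝ) (hc : 0 < c) (hη : 0 < η)
    (S T : Matrix (Fin m) (Fin m) ℝ) (hS : S.PosSemidef) (hT : T.PosDef) :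
    let h : Matrix (Fin m) (Fin m) ℝ → ℝ := fun Sig =>
      (c / 2) * (Real.log Sig.det + (Sig⁻¹ * S).trace) +
      (η / 2) * ((Sig⁻¹ * T).trace - Real.log (Sig⁻¹ * T).det - m)
    let Sigstar : Matrix (Fin m) (Fin m) ℝ := (c + η)⁻¹ • (c • S + η • T)
    Sigstar.PosDef ∧
    (∀ Sig : Matrix (Fin m) (Fin m) ℝ, Sig.PosDef → h Sigstar ≤ h Sig) ∧
    (∀ Sig : Matrix (Fin m) (Fin m) ℝ, Sig.PosDef →
      (h Sig = h Sigstar ↔ Sig = Sigstar)) := by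
  intro h Sigstar
  have hcη : 0 < c + η := by linarith
  have hcS : (c • S).PosSemidef := by
    refine ⟨?_, fun x => ?_⟩
    · unfold Matrix.IsHermitian
      rw [conjTranspose_smul, hS.1.eq]; simp
    · exact (hS.smul hc.le).2 x
  have hηT : (η • T).PosDef := myPosDef_smul hT hη
  have hsum : (c • S + η • T).PosDef := Matrix.PosDef.posSemidef_add hcS hηT
  have hstar : Sigstar.PosDef := myPosDef_smul hsum (inv_pos.2 hcη)
  -- the key affine identity
  have hident : ∀ Sig : Matrix (Fin m) (Fin m) ℝ, Sig.PosDef →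
      h Sig = ((c + η) / 2) * (Real.log Sig.det + (Sig⁻¹ * Sigstar).trace)
        - (η / 2) * (Real.log T.det + m) := by
    intro Sig hSig
    have htrace : (Sig⁻¹ * Sigstar).trace =
        (c + η)⁻¹ * (c * (Sig⁻¹ * S).trace + η * (Sig⁻¹ * T).trace) := by
      show (Sig⁻¹ * ((c + η)⁻¹ • (c • S + η • T))).trace = _
      rw [Matrix.mul_smul, Matrix.mul_add, Matrix.mul_smul, Matrix.mul_smul,
        Matrix.trace_smul, Matrix.trace_add, Matrix.trace_smul, Matrix.trace_smul]
      simp [smul_eq_mul, mul_add]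
    have hlogdet : Real.log (Sig⁻¹ * T).det = Real.log T.det - Real.log Sig.det := by
      rw [Matrix.det_mul, Matrix.det_nonsing_inv, Ring.inverse_eq_inv,
        Real.log_mul (inv_ne_zero hSig.det_pos.ne') hT.det_pos.ne', Real.log_inv]
      ring
    show (c / 2) * (Real.log Sig.det + (Sig⁻¹ * S).trace) +
      (η / 2) * ((Sig⁻¹ * T).trace - Real.log (Sig⁻¹ * T).det - m) = _
    rw [htrace, hlogdet]
    field_simp
    ring
  have hdiff : ∀ Sig : Matrix (Fin m) (Fin m) ℝ, Sig.PosDef →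
      h Sig - h Sigstar = ((c + η) / 2) *
        ((Sig⁻¹ * Sigstar).trace - Real.log (Sig⁻¹ * Sigstar).det - m) := by
    intro Sig hSig
    rw [hident Sig hSig, hident Sigstar hstar]
    have hinv1 : Sigstar⁻¹ * Sigstar = 1 :=
      Sigstar.nonsing_inv_mul hstar.det_pos.ne'.isUnit
    have hlogdet : Real.log (Sig⁻¹ * Sigstar).det =
        Real.log Sigstar.det - Real.log Sig.det := by
      rw [Matrix.det_mul, Matrix.det_nonsing_inv, Ring.inverse_eq_inv,
        Real.log_mul (inv_ne_zero hSig.det_pos.ne') hstar.det_pos.ne', Real.log_inv]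
      ring
    rw [hinv1, Matrix.trace_one, hlogdet]
    simp only [Finset.card_univ, Fintype.card_fin]
    ring
  refine ⟨hstar, ?_, ?_⟩
  · intro Sig hSig
    have hk := (inv_mul_key hSig hstar).1
    have hnn := mul_nonneg (by positivity : (0:ℝ) ≤ (c + η) / 2) hk
    have hd := hdiff Sig hSig
    rw [← hd] at hnn
    linarith
  · intro Sig hSig
    constructor
    · intro heq
      have hd := hdiff Sig hSig
      rw [heq, sub_self] at hd
      have hk := (inv_mul_key hSig hstar).2
      apply hk.mp
      have hne : ((c + η) / 2 : ℝ) ≠ 0 := by positivity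
      rcases mul_eq_zero.mp hd.symm with h1 | h1
      · exact absurd h1 hne
      · exact h1
    · rintro rfl
      rfl
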